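/- Let S = UΣVᵀ be a thin SVD of S ∈ ℝ^{ℓ×D} with singular values σ₁ ≥ … ≥ σ_ℓ, δ = σ_ℓ², and let S' = Σ'Vᵀ where σ'_j = sqrt(max(σ_j²−δ,0)). Then 0 ⪯ SᵀS − S'ᵀS' ⪯ δ·I_D. -/

import Mathlib

open scoped Matrix

lemma psd_conj {m n : Type*} [Fintype m] [Fintype n] [DecidableEq n]
    (V : Matrix m n ℝ) (d : n → ℝ) (hd : ∀ i, 0 ≤ d i) :
    (V * Matrix.diagonal d * Vᵀ).PosSemidef := by
  have h : (Matrix.diagonal d).PosSemidef := Matrix.posSemidef_diagonal_iff.mpr hd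
  simpa using h.mul_mul_conjTranspose_same V

lemma psd_smul {n : Type*} [Fintype n] {A : Matrix n n ℝ} (h : A.PosSemidef)
    {c : ℝ} (hc : 0 ≤ c) : (c • A).PosSemidef := by
  refine ⟨?_, fun x => ?_⟩
  · unfold Matrix.IsHermitian at *
    rw [Matrix.conjTranspose_smul, h.1]
    simp
  · have := h.2 x
    have h' := mul_nonneg hc this
    simp only [Finsupp.sum, Finset.mul_sum] at h'
    simp only [Finsupp.sum, Matrix.smul_apply, smul_eq_mul]
    refine le_of_le_of_eq h' ?_
    exact Finset.sum_congr rfl fun i _ => Finset.sum_congr rfl fun j _ => by ring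

theorem sage_fd_shrink_step {ℓ D : ℕ}
    (S : Matrix (Fin (ℓ + 1)) (Fin D) ℝ)
    (U : Matrix (Fin (ℓ + 1)) (Fin (ℓ + 1)) ℝ)
    (V : Matrix (Fin D) (Fin (ℓ + 1)) ℝ)
    (σ : Fin (ℓ + 1) → ℝ) (hnn : ∀ j, 0 ≤ σ j) (hmono : Antitone σ)
    (hU : Uᵀ * U = 1) (hV : Vᵀ * V = 1)
    (hSVD : S = U * Matrix.diagonal σ * Vᵀ)
    (δ : ℝ) (hδ : δ = σ (Fin.last ℓ) ^ 2)
    (S' : Matrix (Fin (ℓ + 1)) (Fin D) ℝ)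
    (hS' : S' = Matrix.diagonal (fun j => Real.sqrt (max (σ j ^ 2 - δ) 0)) * Vᵀ) :
    (Sᵀ * S - S'ᵀ * S').PosSemidef ∧
    (δ • (1 : Matrix (Fin D) (Fin D) ℝ) - (Sᵀ * S - S'ᵀ * S')).PosSemidef := by
  have hδ0 : 0 ≤ δ := hδ ▸ sq_nonneg _
  have hSS : Sᵀ * S = V * Matrix.diagonal (fun j => σ j ^ 2) * Vᵀ := by
    subst hSVD
    simp only [Matrix.transpose_mul, Matrix.diagonal_transpose, Matrix.transpose_transpose,
      Matrix.mul_assoc]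
    rw [← Matrix.mul_assoc Uᵀ U, hU, Matrix.one_mul,
      ← Matrix.mul_assoc (Matrix.diagonal σ), Matrix.diagonal_mul_diagonal]
    congr 2
    funext j
    ring
  have hSS' : S'ᵀ * S' = V * Matrix.diagonal (fun j => max (σ j ^ 2 - δ) 0) * Vᵀ := by
    subst hS'
    simp only [Matrix.transpose_mul, Matrix.diagonal_transpose, Matrix.transpose_transpose,
      Matrix.mul_assoc]
    rw [← Matrix.mul_assoc (Matrix.diagonal _), Matrix.diagonal_mul_diagonal]
    have hsq : (fun j => Real.sqrt (max (σ j ^ 2 - δ) 0) * Real.sqrt (max (σ j ^ 2 - δ) 0))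
        = fun j => max (σ j ^ 2 - δ) 0 :=
      funext fun j => Real.mul_self_sqrt (le_max_right _ _)
    rw [hsq]
  set f : Fin (ℓ + 1) → ℝ := fun j => σ j ^ 2 - max (σ j ^ 2 - δ) 0 with hf
  have hdiff : Sᵀ * S - S'ᵀ * S' = V * Matrix.diagonal f * Vᵀ := by
    rw [hSS, hSS', ← Matrix.sub_mul, ← Matrix.mul_sub, ← Matrix.diagonal_sub]
  have hf0 : ∀ j, 0 ≤ f j := by
    intro j
    simp only [hf, sub_nonneg, max_le_iff]
    exact ⟨by linarith, sq_nonneg _⟩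
  have hfδ : ∀ j, f j ≤ δ := by
    intro j
    simp only [hf]
    rcases le_total (σ j ^ 2 - δ) 0 with h | h
    · rw [max_eq_right h]; linarith
    · rw [max_eq_left h]; linarith
  constructor
  · rw [hdiff]; exact psd_conj V f hf0
  · rw [hdiff]
    have hd : Matrix.diagonal (fun j => δ - f j)
        = δ • (1 : Matrix (Fin (ℓ + 1)) (Fin (ℓ + 1)) ℝ) - Matrix.diagonal f := by
      ext i j
      by_cases h : i = j <;> simp [h, Matrix.diagonal_apply, Matrix.one_apply]
    have key : δ • (1 : Matrix (Fin D) (Fin D) ℝ) - V * Matrix.diagonal f * Vᵀ =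
        δ • ((1 : Matrix (Fin D) (Fin D) ℝ) - V * Vᵀ) +
          V * Matrix.diagonal (fun j => δ - f j) * Vᵀ := by
      rw [hd]
      simp only [smul_sub, Matrix.mul_sub, Matrix.sub_mul, Matrix.mul_smul, Matrix.smul_mul,
        Matrix.mul_one]
      abel
    rw [key]
    have hproj : ((1 : Matrix (Fin D) (Fin D) ℝ) - V * Vᵀ).PosSemidef := by
      have hP : (1 : Matrix (Fin D) (Fin D) ℝ) - V * Vᵀ =
          ((1 : Matrix (Fin D) (Fin D) ℝ) - V * Vᵀ)ᵀ * ((1 : Matrix (Fin D) (Fin D) ℝ) - V * Vᵀ) := by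
        simp only [Matrix.transpose_sub, Matrix.transpose_one, Matrix.transpose_mul,
          Matrix.transpose_transpose, Matrix.sub_mul, Matrix.mul_sub, Matrix.one_mul,
          Matrix.mul_one]
        rw [Matrix.mul_assoc V Vᵀ, ← Matrix.mul_assoc Vᵀ V, hV]
        simp
      rw [hP]
      simpa using Matrix.posSemidef_conjTranspose_mul_self
        ((1 : Matrix (Fin D) (Fin D) ℝ) - V * Vᵀ)
    exact (psd_smul hproj hδ0).add (psd_conj V _ (fun j => sub_nonneg.mpr (hfδ j)))
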